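/- Main recursion formula: let n ≥ 2 be a natural number, p₁ a prime dividing n with multiplicity n₁, and write n = p₁^{n₁} · m with p₁ ∤ m. Then in ℚ: p*(n) · n₁ = ∑_{i=1}^{n₁} i · ( ∑_{d ∣ m} λ(p₁^{i} · d) · p*( n / (p₁^{i} · d) ) ), where for a natural number e ≥ 2, c(e) is the greatest common divisor of the exponents in the prime factorization of e and λ(e) = ∑_{j ∣ c(e)} 1/j. -/

import Mathlib

/-- The number of unordered factorizations of `m`: the number of multisets of
natural numbers, all at least `2`, whose product is `m`. -/
noncomputable def numFactorizations (m : ℕ) : ℕ :=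
  Nat.card {s : Multiset ℕ // (∀ x ∈ s, 2 ≤ x) ∧ s.prod = m}

/-- `c(e)`: the gcd of the exponents in the prime factorization of `e`. -/
def expGcd (e : ℕ) : ℕ :=
  e.primeFactors.gcd fun p => e.factorization p

/-- `λ(e) = ∑_{j ∣ c(e)} 1/j`. -/
noncomputable def lam (e : ℕ) : ℚ :=
  ∑ j ∈ (expGcd e).divisors, (1 : ℚ) / j

open Finset

lemma facSet_finite (n : ℕ) : {s : Multiset ℕ | (∀ x ∈ s, 2 ≤ x) ∧ s.prod = n}.Finite := by
  rcases eq_or_ne n 0 with rfl | hn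
  · convert Set.finite_empty
    ext s
    simp only [Set.mem_setOf_eq, Set.mem_empty_iff_false, iff_false, not_and]
    intro h hp
    rw [Multiset.prod_eq_zero_iff] at hp
    have := h 0 hp; omega
  · apply Set.Finite.subset ((n • (Finset.range (n+1)).val).powerset.toFinset).finite_toSet
    intro s hs
    obtain ⟨h2, hp⟩ := hs
    have hcard : s.card ≤ n := by
      have h1 : (2:ℕ) ^ s.card ≤ s.prod := Multiset.pow_card_le_prod h2
      rw [hp] at h1
      by_contra hc
      push_neg at hc
      have := Nat.lt_two_pow_self (n := n)
      have : (2:ℕ)^n ≤ 2^s.card := Nat.pow_le_pow_right (by norm_num) (by omega)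
      omega
    simp only [Finset.coe_sort_coe, Finset.mem_coe, Multiset.mem_toFinset, Multiset.mem_powerset]
    rw [Multiset.le_iff_count]
    intro e
    rw [Multiset.count_nsmul]
    rcases le_or_gt e n with he | he
    · have : e ∈ Finset.range (n+1) := by simp; omega
      have h1 : Multiset.count e s ≤ s.card := Multiset.count_le_card e s
      have h2' : 1 ≤ (Finset.range (n+1)).val.count e :=
        Multiset.one_le_count_iff_mem.2 this
      calc Multiset.count e s ≤ n := le_trans h1 hcard
        _ = n * 1 := (mul_one n).symm
        _ ≤ n * (Finset.range (n+1)).val.count e := Nat.mul_le_mul_left n h2'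
    · have : e ∉ s := by
        intro hmem
        have : e ∣ s.prod := Multiset.dvd_prod hmem
        rw [hp] at this
        have := Nat.le_of_dvd (by omega) this
        omega
      simp [Multiset.count_eq_zero_of_notMem this]

noncomputable def FS (n : ℕ) : Finset (Multiset ℕ) := (facSet_finite n).toFinset

lemma mem_FS {n : ℕ} {s : Multiset ℕ} : s ∈ FS n ↔ (∀ x ∈ s, 2 ≤ x) ∧ s.prod = n := by
  simp [FS, Set.Finite.mem_toFinset]

lemma numFac_eq (n : ℕ) : numFactorizations n = (FS n).card := by
  rw [numFactorizations, FS]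
  rw [show {s : Multiset ℕ // (∀ x ∈ s, 2 ≤ x) ∧ s.prod = n} = ↥{s : Multiset ℕ | (∀ x ∈ s, 2 ≤ x) ∧ s.prod = n} from rfl,
    Nat.card_coe_set_eq, Set.ncard_eq_toFinset_card _ (facSet_finite n)]

lemma fac_sum (p : ℕ) (s : Multiset ℕ) (h : ∀ x ∈ s, 2 ≤ x) :
    (s.map (fun e => e.factorization p)).sum = (s.prod).factorization p := by
  induction s using Multiset.induction_on with
  | empty => simp
  | cons a s ih =>
    have ha : a ≠ 0 := by have := h a (Multiset.mem_cons_self a s); omega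
    have hs : s.prod ≠ 0 := by
      rw [Ne, Multiset.prod_eq_zero_iff]
      intro h0
      have := h 0 (Multiset.mem_cons_of_mem h0); omega
    rw [Multiset.map_cons, Multiset.sum_cons, Multiset.prod_cons,
      Nat.factorization_mul ha hs]
    simp only [Finsupp.add_apply]
    rw [ih (fun x hx => h x (Multiset.mem_cons_of_mem hx))]

lemma map_sum_eq_divisors_sum (p n : ℕ) (hn : n ≠ 0) (s : Multiset ℕ) (hs : s ∈ FS n) :
    (s.map (fun e => e.factorization p)).sum
      = ∑ e ∈ n.divisors, s.count e * e.factorization p := by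
  obtain ⟨h2, hp⟩ := mem_FS.1 hs
  rw [Finset.sum_multiset_map_count]
  apply Finset.sum_subset
  · intro e he
    rw [Multiset.mem_toFinset] at he
    rw [Nat.mem_divisors]
    exact ⟨hp ▸ Multiset.dvd_prod he, hn⟩
  · intro e _ he
    rw [Multiset.mem_toFinset] at he
    simp [Multiset.count_eq_zero_of_notMem he]

lemma step_A (p n : ℕ) (hn : n ≠ 0) :
    (FS n).card * n.factorization p
      = ∑ e ∈ n.divisors, e.factorization p * ∑ s ∈ FS n, s.count e := by
  have : ∀ s ∈ FS n, n.factorization p = ∑ e ∈ n.divisors, s.count e * e.factorization p := by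
    intro s hs
    rw [← map_sum_eq_divisors_sum p n hn s hs, fac_sum p s (mem_FS.1 hs).1, (mem_FS.1 hs).2]
  calc (FS n).card * n.factorization p = ∑ s ∈ FS n, n.factorization p := by
        rw [Finset.sum_const, smul_eq_mul]
    _ = ∑ s ∈ FS n, ∑ e ∈ n.divisors, s.count e * e.factorization p :=
        Finset.sum_congr rfl this
    _ = ∑ e ∈ n.divisors, e.factorization p * ∑ s ∈ FS n, s.count e := by
        rw [Finset.sum_comm]
        apply Finset.sum_congr rfl
        intro e _
        rw [Finset.mul_sum]
        apply Finset.sum_congr rfl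
        intro s _
        ring

lemma card_filter_count (n e k : ℕ) (he : 2 ≤ e) (hn : n ≠ 0) (hd : e ^ k ∣ n) :
    ((FS n).filter (fun s => k ≤ s.count e)).card = (FS (n / e ^ k)).card := by
  have hrep : ∀ s : Multiset ℕ, k ≤ s.count e → Multiset.replicate k e ≤ s := by
    intro s hk
    rw [Multiset.le_iff_count]
    intro a
    rcases eq_or_ne a e with rfl | hne
    · simpa using hk
    · rw [Multiset.count_replicate]
      simp [Ne.symm hne]
  apply Finset.card_nbij' (fun s => s - Multiset.replicate k e)
    (fun t => t + Multiset.replicate k e)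
  · intro s hs
    rw [Finset.mem_coe, Finset.mem_filter] at hs
    obtain ⟨hs, hk⟩ := hs
    obtain ⟨h2, hp⟩ := mem_FS.1 hs
    have hle := hrep s hk
    rw [Finset.mem_coe, mem_FS]
    have hsub : (s - Multiset.replicate k e) + Multiset.replicate k e = s :=
      tsub_add_cancel_of_le hle
    refine ⟨fun x hx => h2 x (Multiset.mem_of_le (Multiset.sub_le_self s _) hx), ?_⟩
    have hprod : (s - Multiset.replicate k e).prod * e ^ k = n := by
      conv_rhs => rw [← hp, ← hsub]
      rw [Multiset.prod_add, Multiset.prod_replicate]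
    have hek : 0 < e ^ k := pow_pos (by omega) k
    rw [← hprod, Nat.mul_div_cancel _ hek]
  · intro t ht
    obtain ⟨h2, hp⟩ := mem_FS.1 ht
    rw [Finset.mem_coe, Finset.mem_filter, mem_FS]
    refine ⟨⟨fun x hx => ?_, ?_⟩, ?_⟩
    · rcases Multiset.mem_add.1 hx with h | h
      · exact h2 x h
      · rw [Multiset.eq_of_mem_replicate h]; exact he
    · rw [Multiset.prod_add, Multiset.prod_replicate, hp]
      exact Nat.div_mul_cancel hd
    · simp [Multiset.count_replicate]
  · intro s hs
    rw [Finset.mem_coe, Finset.mem_filter] at hs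
    exact tsub_add_cancel_of_le (hrep s hs.2)
  · intro t ht
    exact add_tsub_cancel_right _ _

lemma filter_count_empty (n e k : ℕ) (hk : 1 ≤ k) (hn : n ≠ 0) (hd : ¬ e ^ k ∣ n) :
    ((FS n).filter (fun s => k ≤ s.count e)).card = 0 := by
  rw [Finset.card_eq_zero, Finset.filter_eq_empty_iff]
  intro s hs hk'
  obtain ⟨h2, hp⟩ := mem_FS.1 hs
  apply hd
  have hle : Multiset.replicate k e ≤ s := by
    rw [Multiset.le_iff_count]
    intro a
    rcases eq_or_ne a e with rfl | hne
    · simpa using hk'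
    · rw [Multiset.count_replicate]
      simp [Ne.symm hne]
  calc e ^ k = (Multiset.replicate k e).prod := (Multiset.prod_replicate k e).symm
    _ ∣ s.prod := Multiset.prod_dvd_prod_of_le hle
    _ = n := hp

lemma count_le (n : ℕ) (hn : n ≠ 0) (s : Multiset ℕ) (hs : s ∈ FS n) (e : ℕ) :
    s.count e ≤ n := by
  obtain ⟨h2, hp⟩ := mem_FS.1 hs
  have h1 : (2:ℕ) ^ s.card ≤ s.prod := Multiset.pow_card_le_prod h2
  rw [hp] at h1
  have h3 : Multiset.count e s ≤ s.card := Multiset.count_le_card e s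
  by_contra hc
  push_neg at hc
  have h4 := Nat.lt_two_pow_self (n := n)
  have h5 : (2:ℕ)^n ≤ 2^s.card := Nat.pow_le_pow_right (by norm_num) (by omega)
  omega

lemma step_B (n e : ℕ) (hn : n ≠ 0) (he : 2 ≤ e) :
    ∑ s ∈ FS n, s.count e
      = ∑ k ∈ Finset.Icc 1 n, if e ^ k ∣ n then (FS (n / e ^ k)).card else 0 := by
  have h1 : ∀ s ∈ FS n, s.count e = ∑ k ∈ Finset.Icc 1 n,
      if k ≤ s.count e then 1 else 0 := by
    intro s hs
    have hc := count_le n hn s hs e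
    rw [Finset.sum_boole]
    have : Finset.filter (fun k => k ≤ s.count e) (Finset.Icc 1 n)
        = Finset.Icc 1 (s.count e) := by
      ext k
      simp only [Finset.mem_filter, Finset.mem_Icc]
      omega
    rw [this, Nat.card_Icc]
    simp
  calc ∑ s ∈ FS n, s.count e
      = ∑ s ∈ FS n, ∑ k ∈ Finset.Icc 1 n, if k ≤ s.count e then 1 else 0 :=
        Finset.sum_congr rfl h1
    _ = ∑ k ∈ Finset.Icc 1 n, ∑ s ∈ FS n, if k ≤ s.count e then 1 else 0 :=
        Finset.sum_comm
    _ = ∑ k ∈ Finset.Icc 1 n, ((FS n).filter (fun s => k ≤ s.count e)).card := by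
        apply Finset.sum_congr rfl
        intro k _
        rw [Finset.card_filter]
    _ = ∑ k ∈ Finset.Icc 1 n, if e ^ k ∣ n then (FS (n / e ^ k)).card else 0 := by
        apply Finset.sum_congr rfl
        intro k hk
        rw [Finset.mem_Icc] at hk
        by_cases hd : e ^ k ∣ n
        · rw [if_pos hd, card_filter_count n e k he hn hd]
        · rw [if_neg hd, filter_count_empty n e k hk.1 hn hd]

def kroot (g j : ℕ) : ℕ := g.factorization.prod fun p t => p ^ (t / j)

lemma kroot_pow (g j : ℕ) (hg : g ≠ 0) (hdvd : ∀ p, j ∣ g.factorization p) :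
    (kroot g j) ^ j = g := by
  rw [kroot, Finsupp.prod, ← Finset.prod_pow]
  conv_rhs => rw [← Nat.factorization_prod_pow_eq_self hg]
  rw [Finsupp.prod]
  apply Finset.prod_congr rfl
  intro p hp
  rw [← pow_mul, Nat.div_mul_cancel (hdvd p)]

lemma expGcd_dvd (g : ℕ) (p : ℕ) (hp : p ∈ g.primeFactors) :
    expGcd g ∣ g.factorization p := Finset.gcd_dvd hp

lemma expGcd_ne_zero (g : ℕ) (hg : 2 ≤ g) : expGcd g ≠ 0 := by
  intro h
  obtain ⟨p, hp⟩ := Nat.exists_prime_and_dvd (show g ≠ 1 by omega)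
  have hpf : p ∈ g.primeFactors := Nat.mem_primeFactors.2 ⟨hp.1, hp.2, by omega⟩
  have := Finset.gcd_eq_zero_iff.1 h p hpf
  have := Nat.Prime.factorization_pos_of_dvd hp.1 (by omega) hp.2
  omega

lemma expGcd_dvd_all (g j : ℕ) (hj : j ∣ expGcd g) (p : ℕ) : j ∣ g.factorization p := by
  by_cases hp : p ∈ g.primeFactors
  · exact hj.trans (expGcd_dvd g p hp)
  · rw [← Nat.support_factorization, Finsupp.notMem_support_iff] at hp
    simp [hp]

lemma v_mul {p : ℕ} (hp : p.Prime) (i d : ℕ) (hd0 : d ≠ 0) (hpd : ¬ p ∣ d) :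
    (p ^ i * d).factorization p = i := by
  rw [Nat.factorization_mul (pow_ne_zero i hp.ne_zero) hd0]
  simp [Nat.factorization_eq_zero_of_not_dvd hpd, Nat.Prime.factorization_pow hp]


/-- Main recursion formula: for `n ≥ 2`, a prime `p₁` dividing
`n` with multiplicity `n₁`, and `n = p₁^{n₁} · m` with `p₁ ∤ m`,
`p*(n) · n₁ = ∑_{i=1}^{n₁} i · (∑_{d ∣ m} λ(p₁^i d) · p*(n / (p₁^i d)))` in `ℚ`. -/
theorem stmt11 (n : ℕ) (hn : 2 ≤ n) (p₁ : ℕ) (hp₁ : p₁.Prime) (hdvd : p₁ ∣ n)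
    (n₁ : ℕ) (hn₁ : n₁ = n.factorization p₁)
    (m : ℕ) (hm : n = p₁ ^ n₁ * m) (hpm : ¬ p₁ ∣ m) :
    (numFactorizations n : ℚ) * (n₁ : ℚ) =
      ∑ i ∈ Finset.Icc 1 n₁, (i : ℚ) *
        ∑ d ∈ m.divisors,
          lam (p₁ ^ i * d) * numFactorizations (n / (p₁ ^ i * d)) := by
  have hn0 : n ≠ 0 := by omega
  have hm0 : m ≠ 0 := by rintro rfl; simp at hm; omega
  have hp2 := hp₁.two_le
  set v : ℕ → ℕ := fun e => e.factorization p₁ with hv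
  set P : ℕ → ℚ := fun x => ((FS x).card : ℚ) with hP
  -- Step I : natural-number key identity
  have natKey : (FS n).card * n₁ = ∑ e ∈ n.divisors,
      v e * ∑ k ∈ Finset.Icc 1 n, if e ^ k ∣ n then (FS (n / e ^ k)).card else 0 := by
    rw [hn₁, step_A p₁ n hn0]
    apply Finset.sum_congr rfl
    intro e he
    have he0 : e ≠ 0 := (Nat.pos_of_mem_divisors he).ne'
    rcases eq_or_ne e 1 with rfl | h1
    · simp [hv]
    · rw [step_B n e hn0 (by omega)]
  -- Cast to ℚ
  have qKey : P n * (n₁ : ℚ) = ∑ e ∈ n.divisors,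
      (v e : ℚ) * ∑ k ∈ Finset.Icc 1 n, if e ^ k ∣ n then P (n / e ^ k) else 0 := by
    have := congrArg (fun t : ℕ => (t : ℚ)) natKey
    push_cast [apply_ite (Nat.cast : ℕ → ℚ)] at this
    simpa [hP] using this
  set T₁ : Finset (ℕ × ℕ) :=
    (n.divisors ×ˢ Finset.Icc 1 n).filter (fun q => q.1 ^ q.2 ∣ n ∧ p₁ ∣ q.1) with hT₁
  set T₂ : Finset ℕ := n.divisors.filter (fun g => p₁ ∣ g) with hT₂
  -- LHS as a sum over pairs
  have lhs_eq : P n * (n₁ : ℚ) = ∑ q ∈ T₁, (v q.1 : ℚ) * P (n / q.1 ^ q.2) := by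
    rw [qKey, hT₁, Finset.sum_filter, Finset.sum_product]
    apply Finset.sum_congr rfl
    intro e he
    rw [Finset.mul_sum]
    apply Finset.sum_congr rfl
    intro k hk
    by_cases hd : e ^ k ∣ n
    · by_cases hpe : p₁ ∣ e
      · simp [hd, hpe]
      · have : v e = 0 := Nat.factorization_eq_zero_of_not_dvd hpe
        simp [hd, hpe, this]
    · simp [hd]
  -- RHS as a sum over T₂
  have rhs_eq : (∑ i ∈ Finset.Icc 1 n₁, (i : ℚ) *
        ∑ d ∈ m.divisors, lam (p₁ ^ i * d) * (numFactorizations (n / (p₁ ^ i * d)) : ℚ))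
      = ∑ g ∈ T₂, (v g : ℚ) * (lam g * P (n / g)) := by
    have : ∀ i ∈ Finset.Icc 1 n₁, (i:ℚ) * ∑ d ∈ m.divisors,
        lam (p₁ ^ i * d) * (numFactorizations (n / (p₁ ^ i * d)) : ℚ)
        = ∑ d ∈ m.divisors, (i:ℚ) * (lam (p₁ ^ i * d) * P (n / (p₁ ^ i * d))) := by
      intro i _
      rw [Finset.mul_sum]
      apply Finset.sum_congr rfl
      intro d _
      rw [numFac_eq]
    rw [Finset.sum_congr rfl this, ← Finset.sum_product']
    refine Finset.sum_nbij' (i := fun q : ℕ × ℕ => p₁ ^ q.1 * q.2)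
      (j := fun g => (v g, g / p₁ ^ v g)) ?_ ?_ ?_ ?_ ?_
    · rintro ⟨i, d⟩ hq
      rw [Finset.mem_product, Finset.mem_Icc] at hq
      obtain ⟨⟨hi1, hi2⟩, hd⟩ := hq
      rw [hT₂, Finset.mem_filter, Nat.mem_divisors]
      refine ⟨⟨?_, hn0⟩, Dvd.dvd.mul_right (dvd_pow_self p₁ (by omega)) d⟩
      rw [hm]
      exact mul_dvd_mul (pow_dvd_pow p₁ hi2) (Nat.dvd_of_mem_divisors hd)
    · intro g hg
      rw [hT₂, Finset.mem_filter, Nat.mem_divisors] at hg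
      obtain ⟨⟨hgn, -⟩, hpg⟩ := hg
      have hg0 : g ≠ 0 := by rintro rfl; exact hn0 (Nat.eq_zero_of_zero_dvd hgn)
      rw [Finset.mem_product, Finset.mem_Icc]
      have hv1 : 1 ≤ v g := Nat.Prime.factorization_pos_of_dvd hp₁ hg0 hpg
      have hvn : v g ≤ n₁ := by
        rw [hn₁]
        exact (Nat.factorization_le_iff_dvd hg0 hn0).2 hgn p₁
      refine ⟨⟨hv1, hvn⟩, ?_⟩
      rw [Nat.mem_divisors]
      refine ⟨?_, hm0⟩
      have hd1 : (g / p₁ ^ v g) ∣ p₁ ^ n₁ * m := by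
        calc g / p₁ ^ v g ∣ g := Nat.div_dvd_of_dvd (Nat.ordProj_dvd g p₁)
          _ ∣ n := hgn
          _ = p₁ ^ n₁ * m := hm
      have hnd : ¬ p₁ ∣ g / p₁ ^ v g := Nat.not_dvd_ordCompl hp₁ hg0
      have hcop : Nat.Coprime (g / p₁ ^ v g) (p₁ ^ n₁) :=
        Nat.Coprime.pow_right _ (((Nat.Prime.coprime_iff_not_dvd hp₁).2 hnd).symm)
      exact hcop.dvd_of_dvd_mul_left hd1
    · rintro ⟨i, d⟩ hq
      rw [Finset.mem_product, Finset.mem_Icc] at hq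
      obtain ⟨⟨hi1, hi2⟩, hd⟩ := hq
      have hd0 : d ≠ 0 := (Nat.pos_of_mem_divisors hd).ne'
      have hpd : ¬ p₁ ∣ d := fun h => hpm (h.trans (Nat.dvd_of_mem_divisors hd))
      have hvq : v (p₁ ^ i * d) = i := v_mul hp₁ i d hd0 hpd
      rw [Prod.mk.injEq, hvq]
      exact ⟨rfl, by rw [Nat.mul_div_cancel_left d (pow_pos hp₁.pos i)]⟩
    · intro g hg
      exact Nat.mul_div_cancel' (Nat.ordProj_dvd g p₁)
    · rintro ⟨i, d⟩ hq
      rw [Finset.mem_product, Finset.mem_Icc] at hq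
      obtain ⟨⟨hi1, hi2⟩, hd⟩ := hq
      have hd0 : d ≠ 0 := (Nat.pos_of_mem_divisors hd).ne'
      have hpd : ¬ p₁ ∣ d := fun h => hpm (h.trans (Nat.dvd_of_mem_divisors hd))
      have hvq : v (p₁ ^ i * d) = i := v_mul hp₁ i d hd0 hpd
      rw [hvq]
  -- expand lam over sigma
  have sigma_eq : ∑ g ∈ T₂, (v g : ℚ) * (lam g * P (n / g))
      = ∑ x ∈ T₂.sigma (fun g => (expGcd g).divisors),
          ((v x.1 : ℚ) / x.2) * P (n / x.1) := by
    rw [Finset.sum_sigma]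
    apply Finset.sum_congr rfl
    intro g _
    rw [lam, Finset.sum_mul, Finset.mul_sum]
    apply Finset.sum_congr rfl
    intro j _
    ring
  -- bijection between pairs and sigma
  have pair_eq : ∑ q ∈ T₁, (v q.1 : ℚ) * P (n / q.1 ^ q.2)
      = ∑ x ∈ T₂.sigma (fun g => (expGcd g).divisors),
          ((v x.1 : ℚ) / x.2) * P (n / x.1) := by
    refine Finset.sum_nbij' (i := fun q : ℕ × ℕ => ⟨q.1 ^ q.2, q.2⟩)
      (j := fun x : Σ _ : ℕ, ℕ => (kroot x.1 x.2, x.2)) ?_ ?_ ?_ ?_ ?_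
    · rintro ⟨e, k⟩ hq
      rw [hT₁, Finset.mem_filter, Finset.mem_product, Finset.mem_Icc] at hq
      obtain ⟨⟨he, hk1, hk2⟩, hdk, hpe⟩ := hq
      have he0 : e ≠ 0 := (Nat.pos_of_mem_divisors he).ne'
      have hk0 : k ≠ 0 := by omega
      have hpg : p₁ ∣ e ^ k := hpe.trans (dvd_pow_self e hk0)
      have hg0 : e ^ k ≠ 0 := pow_ne_zero k he0
      have hg2 : 2 ≤ e ^ k := by
        have h1 : e ^ k ≠ 1 := fun h => hp₁.one_lt.ne' (Nat.dvd_one.1 (h ▸ hpg))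
        have h2 : e ^ k ≠ 0 := hg0
        omega
      rw [Finset.mem_sigma, hT₂, Finset.mem_filter, Nat.mem_divisors, Nat.mem_divisors]
      refine ⟨⟨⟨hdk, hn0⟩, hpg⟩, ?_, expGcd_ne_zero _ hg2⟩
      apply Finset.dvd_gcd
      intro p hp
      rw [Nat.factorization_pow]
      exact dvd_mul_right k _
    · rintro ⟨g, j⟩ hx
      rw [Finset.mem_sigma, hT₂, Finset.mem_filter, Nat.mem_divisors, Nat.mem_divisors] at hx
      obtain ⟨⟨⟨hgn, -⟩, hpg⟩, hjd, hE⟩ := hx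
      have hg0 : g ≠ 0 := by rintro rfl; exact hn0 (Nat.eq_zero_of_zero_dvd hgn)
      have hj0 : j ≠ 0 := by rintro rfl; exact hE (Nat.eq_zero_of_zero_dvd hjd)
      have hpow : kroot g j ^ j = g := kroot_pow g j hg0 (expGcd_dvd_all g j hjd)
      have hkd : kroot g j ∣ g := by
        conv_rhs => rw [← hpow]
        exact dvd_pow_self _ hj0
      have hpf : p₁ ∈ g.primeFactors := Nat.mem_primeFactors.2 ⟨hp₁, hpg, hg0⟩
      have hfpos : 0 < g.factorization p₁ := Nat.Prime.factorization_pos_of_dvd hp₁ hg0 hpg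
      have hjf : j ∣ g.factorization p₁ := hjd.trans (expGcd_dvd g p₁ hpf)
      have hjle : j ≤ g.factorization p₁ := Nat.le_of_dvd hfpos hjf
      have hflt : g.factorization p₁ < g := Nat.factorization_lt p₁ hg0
      have hgle : g ≤ n := Nat.le_of_dvd (by omega) hgn
      rw [hT₁, Finset.mem_filter, Finset.mem_product, Finset.mem_Icc, Nat.mem_divisors]
      refine ⟨⟨⟨hkd.trans hgn, hn0⟩, Nat.one_le_iff_ne_zero.2 hj0,
        hjle.trans (hflt.le.trans hgle)⟩, ?_, ?_⟩
      · rw [hpow]; exact hgn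
      · apply hp₁.dvd_of_dvd_pow (n := j)
        rw [hpow]; exact hpg
    · rintro ⟨e, k⟩ hq
      rw [hT₁, Finset.mem_filter, Finset.mem_product, Finset.mem_Icc] at hq
      obtain ⟨⟨he, hk1, hk2⟩, hdk, hpe⟩ := hq
      have he0 : e ≠ 0 := (Nat.pos_of_mem_divisors he).ne'
      have hk0 : k ≠ 0 := by omega
      have hpow2 : kroot (e ^ k) k ^ k = e ^ k := by
        apply kroot_pow _ _ (pow_ne_zero k he0)
        intro p
        rw [Nat.factorization_pow]
        exact dvd_mul_right k _
      have := Nat.pow_left_injective hk0 hpow2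
      simp only [Prod.mk.injEq]
      exact ⟨this, trivial⟩
    · rintro ⟨g, j⟩ hx
      rw [Finset.mem_sigma, hT₂, Finset.mem_filter, Nat.mem_divisors, Nat.mem_divisors] at hx
      obtain ⟨⟨⟨hgn, -⟩, hpg⟩, hjd, hE⟩ := hx
      have hg0 : g ≠ 0 := by rintro rfl; exact hn0 (Nat.eq_zero_of_zero_dvd hgn)
      have hpow : kroot g j ^ j = g := kroot_pow g j hg0 (expGcd_dvd_all g j hjd)
      simp only
      rw [hpow]
    · rintro ⟨e, k⟩ hq
      rw [hT₁, Finset.mem_filter, Finset.mem_product, Finset.mem_Icc] at hq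
      obtain ⟨⟨he, hk1, hk2⟩, hdk, hpe⟩ := hq
      have hk0 : (k : ℚ) ≠ 0 := by exact_mod_cast (by omega : k ≠ 0)
      have hvek : v (e ^ k) = k * v e := by
        simp [hv, Nat.factorization_pow]
      simp only [hvek]
      push_cast
      rw [mul_comm (k:ℚ) _, mul_div_assoc, div_self hk0, mul_one]
  -- assemble
  calc (numFactorizations n : ℚ) * (n₁ : ℚ) = P n * (n₁ : ℚ) := by rw [hP, numFac_eq]
    _ = ∑ q ∈ T₁, (v q.1 : ℚ) * P (n / q.1 ^ q.2) := lhs_eq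
    _ = ∑ x ∈ T₂.sigma (fun g => (expGcd g).divisors),
          ((v x.1 : ℚ) / x.2) * P (n / x.1) := pair_eq
    _ = ∑ g ∈ T₂, (v g : ℚ) * (lam g * P (n / g)) := sigma_eq.symm
    _ = _ := rhs_eq.symm
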